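/- Let θ₁ < θ₂ < θ₃ < θ₁ + 2π be real numbers and let f : ℝ → ℝ be 2π-periodic and differentiable at every point. Suppose there are real numbers α_k, β_k, γ_k (k = 1, 2, 3) such that f(θ) = α₁ + β₁·cos θ + γ₁·sin θ for all θ ∈ [θ₁, θ₂], f(θ) = α₂ + β₂·cos θ + γ₂·sin θ for all θ ∈ [θ₂, θ₃], and f(θ) = α₃ + β₃·cos θ + γ₃·sin θ for all θ ∈ [θ₃, θ₁ + 2π]. Then f(θ) = α₁ + β₁·cos θ + γ₁·sin θ for all θ ∈ ℝ; in particular the three triples (α_k, β_k, γ_k) coincide. -/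

import Mathlib

private lemma mobius_hasDerivAt (α β γ x : ℝ) :
    HasDerivAt (fun t => α + β * Real.cos t + γ * Real.sin t)
      (-(β * Real.sin x) + γ * Real.cos x) x := by
  have h1 := (Real.hasDerivAt_cos x).const_mul β
  have h2 := (Real.hasDerivAt_sin x).const_mul γ
  have h := ((hasDerivAt_const x α).add h1).add h2
  exact h.congr_deriv (by ring)

private lemma deriv_left_of_eq {f : ℝ → ℝ} {a x α β γ : ℝ} (hax : a < x)
    (hf : DifferentiableAt ℝ f x)
    (heq : ∀ y ∈ Set.Icc a x, f y = α + β * Real.cos y + γ * Real.sin y) :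
    deriv f x = -(β * Real.sin x) + γ * Real.cos x := by
  have hmem : Set.Icc a x ∈ nhdsWithin x (Set.Iic x) :=
    Icc_mem_nhdsLE_of_mem ⟨hax, le_rfl⟩
  have hev : f =ᶠ[nhdsWithin x (Set.Iic x)]
      (fun t => α + β * Real.cos t + γ * Real.sin t) :=
    Filter.eventuallyEq_of_mem hmem (fun y hy => heq y hy)
  have h1 : HasDerivWithinAt f (-(β * Real.sin x) + γ * Real.cos x) (Set.Iic x) x :=
    ((mobius_hasDerivAt α β γ x).hasDerivWithinAt).congr_of_eventuallyEq
      hev (heq x ⟨hax.le, le_rfl⟩)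
  have h2 : HasDerivWithinAt f (deriv f x) (Set.Iic x) x :=
    hf.hasDerivAt.hasDerivWithinAt
  have hu : UniqueDiffWithinAt ℝ (Set.Iic x) x :=
    uniqueDiffOn_Iic x x (Set.mem_Iic.mpr le_rfl)
  rw [← h2.derivWithin hu, h1.derivWithin hu]

private lemma deriv_right_of_eq {f : ℝ → ℝ} {x b α β γ : ℝ} (hxb : x < b)
    (hf : DifferentiableAt ℝ f x)
    (heq : ∀ y ∈ Set.Icc x b, f y = α + β * Real.cos y + γ * Real.sin y) :
    deriv f x = -(β * Real.sin x) + γ * Real.cos x := by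
  have hmem : Set.Icc x b ∈ nhdsWithin x (Set.Ici x) :=
    Icc_mem_nhdsGE_of_mem ⟨le_rfl, hxb⟩
  have hev : f =ᶠ[nhdsWithin x (Set.Ici x)]
      (fun t => α + β * Real.cos t + γ * Real.sin t) :=
    Filter.eventuallyEq_of_mem hmem (fun y hy => heq y hy)
  have h1 : HasDerivWithinAt f (-(β * Real.sin x) + γ * Real.cos x) (Set.Ici x) x :=
    ((mobius_hasDerivAt α β γ x).hasDerivWithinAt).congr_of_eventuallyEq
      hev (heq x ⟨le_rfl, hxb.le⟩)
  have h2 : HasDerivWithinAt f (deriv f x) (Set.Ici x) x :=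
    hf.hasDerivAt.hasDerivWithinAt
  have hu : UniqueDiffWithinAt ℝ (Set.Ici x) x :=
    uniqueDiffOn_Ici x x (Set.mem_Ici.mpr le_rfl)
  rw [← h2.derivWithin hu, h1.derivWithin hu]

private lemma sin_two_mul_helper (u v : ℝ) :
    Real.sin (2*u) + Real.sin (2*v) - Real.sin (2*u + 2*v)
      = 4 * Real.sin u * Real.sin v * Real.sin (u + v) := by
  rw [Real.sin_add (2*u) (2*v), Real.sin_two_mul, Real.sin_two_mul,
    Real.cos_two_mul, Real.cos_two_mul, Real.sin_add]
  linear_combination (-4 * Real.sin u * Real.cos u) * Real.sin_sq_add_cos_sq v +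
    (-4 * Real.sin v * Real.cos v) * Real.sin_sq_add_cos_sq u

private lemma sin_add_sin_sub_sin (x y : ℝ) :
    Real.sin x + Real.sin y - Real.sin (x + y)
      = 4 * Real.sin (x/2) * Real.sin (y/2) * Real.sin ((x+y)/2) := by
  have h := sin_two_mul_helper (x/2) (y/2)
  rw [show 2*(x/2) = x by ring, show 2*(y/2) = y by ring,
    show x/2 + y/2 = (x+y)/2 by ring] at h
  exact h

/-- A once differentiable 2π-periodic function which is piecewise Möbius with
(at most) three pieces is a Möbius vector field; in particular the three
defining triples of coefficients coincide. -/
theorem piecewise_mobius_three_pieces_is_mobius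
    (θ₁ θ₂ θ₃ : ℝ) (h₁₂ : θ₁ < θ₂) (h₂₃ : θ₂ < θ₃) (h₃ : θ₃ < θ₁ + 2 * Real.pi)
    (f : ℝ → ℝ) (hper : Function.Periodic f (2 * Real.pi))
    (hdiff : ∀ x : ℝ, DifferentiableAt ℝ f x)
    (α₁ β₁ γ₁ α₂ β₂ γ₂ α₃ β₃ γ₃ : ℝ)
    (h1 : ∀ x ∈ Set.Icc θ₁ θ₂, f x = α₁ + β₁ * Real.cos x + γ₁ * Real.sin x)
    (h2 : ∀ x ∈ Set.Icc θ₂ θ₃, f x = α₂ + β₂ * Real.cos x + γ₂ * Real.sin x)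
    (h3 : ∀ x ∈ Set.Icc θ₃ (θ₁ + 2 * Real.pi),
      f x = α₃ + β₃ * Real.cos x + γ₃ * Real.sin x) :
    (∀ x : ℝ, f x = α₁ + β₁ * Real.cos x + γ₁ * Real.sin x) ∧
      (α₂, β₂, γ₂) = (α₁, β₁, γ₁) ∧ (α₃, β₃, γ₃) = (α₁, β₁, γ₁) := by
  have hπ : (0:ℝ) < Real.pi := Real.pi_pos
  -- piece 1 shifted to the right of θ₁ + 2π
  have h1' : ∀ y ∈ Set.Icc (θ₁ + 2 * Real.pi) (θ₂ + 2 * Real.pi),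
      f y = α₁ + β₁ * Real.cos y + γ₁ * Real.sin y := by
    intro y hy
    have hy' : y - 2 * Real.pi ∈ Set.Icc θ₁ θ₂ := by
      constructor <;> [linarith [hy.1]; linarith [hy.2]]
    have h := h1 _ hy'
    rw [Real.cos_sub_two_pi, Real.sin_sub_two_pi] at h
    rw [← hper.sub_eq y, h]
  -- derivative matching at the three junction points
  have d2L := deriv_left_of_eq h₁₂ (hdiff θ₂) h1
  have d2R := deriv_right_of_eq h₂₃ (hdiff θ₂) h2
  have d3L := deriv_left_of_eq h₂₃ (hdiff θ₃) h2
  have d3R := deriv_right_of_eq h₃ (hdiff θ₃) h3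
  have dTL := deriv_left_of_eq h₃ (hdiff (θ₁ + 2 * Real.pi)) h3
  have dTR := deriv_right_of_eq (by linarith) (hdiff (θ₁ + 2 * Real.pi)) h1'
  have E2d : -(β₁ * Real.sin θ₂) + γ₁ * Real.cos θ₂
      = -(β₂ * Real.sin θ₂) + γ₂ * Real.cos θ₂ := by rw [← d2L, ← d2R]
  have E3d : -(β₂ * Real.sin θ₃) + γ₂ * Real.cos θ₃
      = -(β₃ * Real.sin θ₃) + γ₃ * Real.cos θ₃ := by rw [← d3L, ← d3R]
  have E1d : -(β₃ * Real.sin θ₁) + γ₃ * Real.cos θ₁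
      = -(β₁ * Real.sin θ₁) + γ₁ * Real.cos θ₁ := by
    have h := dTL.symm.trans dTR
    rwa [Real.sin_add_two_pi, Real.cos_add_two_pi] at h
  -- value matching at the three junction points
  have E2v : α₁ + β₁ * Real.cos θ₂ + γ₁ * Real.sin θ₂
      = α₂ + β₂ * Real.cos θ₂ + γ₂ * Real.sin θ₂ := by
    rw [← h1 θ₂ ⟨h₁₂.le, le_rfl⟩, ← h2 θ₂ ⟨le_rfl, h₂₃.le⟩]
  have E3v : α₂ + β₂ * Real.cos θ₃ + γ₂ * Real.sin θ₃
      = α₃ + β₃ * Real.cos θ₃ + γ₃ * Real.sin θ₃ := by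
    rw [← h2 θ₃ ⟨h₂₃.le, le_rfl⟩, ← h3 θ₃ ⟨le_rfl, by linarith⟩]
  have E1v : α₃ + β₃ * Real.cos θ₁ + γ₃ * Real.sin θ₁
      = α₁ + β₁ * Real.cos θ₁ + γ₁ * Real.sin θ₁ := by
    have hv := h3 (θ₁ + 2 * Real.pi) ⟨h₃.le, le_rfl⟩
    rw [Real.cos_add_two_pi, Real.sin_add_two_pi] at hv
    rw [← hv, hper θ₁, h1 θ₁ ⟨le_rfl, h₁₂.le⟩]
  -- introduce abbreviations
  set c₁ := Real.cos θ₁; set s₁ := Real.sin θ₁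
  set c₂ := Real.cos θ₂; set s₂ := Real.sin θ₂
  set c₃ := Real.cos θ₃; set s₃ := Real.sin θ₃
  have p1 : s₁ ^ 2 + c₁ ^ 2 = 1 := Real.sin_sq_add_cos_sq θ₁
  have p2 : s₂ ^ 2 + c₂ ^ 2 = 1 := Real.sin_sq_add_cos_sq θ₂
  have p3 : s₃ ^ 2 + c₃ ^ 2 = 1 := Real.sin_sq_add_cos_sq θ₃
  -- at each junction: coefficient differences
  have hb12 : β₁ - β₂ = -(α₁ - α₂) * c₂ := by
    linear_combination c₂ * E2v - s₂ * E2d - (β₁ - β₂) * p2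
  have hc12 : γ₁ - γ₂ = -(α₁ - α₂) * s₂ := by
    linear_combination s₂ * E2v + c₂ * E2d - (γ₁ - γ₂) * p2
  have hb23 : β₂ - β₃ = -(α₂ - α₃) * c₃ := by
    linear_combination c₃ * E3v - s₃ * E3d - (β₂ - β₃) * p3
  have hc23 : γ₂ - γ₃ = -(α₂ - α₃) * s₃ := by
    linear_combination s₃ * E3v + c₃ * E3d - (γ₂ - γ₃) * p3
  have hb31 : β₃ - β₁ = -(α₃ - α₁) * c₁ := by
    linear_combination c₁ * E1v - s₁ * E1d - (β₃ - β₁) * p1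
  have hc31 : γ₃ - γ₁ = -(α₃ - α₁) * s₁ := by
    linear_combination s₁ * E1v + c₁ * E1d - (γ₃ - γ₁) * p1
  -- linear system for the α differences
  have Ec : (α₁ - α₂) * c₂ + (α₂ - α₃) * c₃ - ((α₁ - α₂) + (α₂ - α₃)) * c₁ = 0 := by
    linear_combination hb12 + hb23 + hb31
  have Es : (α₁ - α₂) * s₂ + (α₂ - α₃) * s₃ - ((α₁ - α₂) + (α₂ - α₃)) * s₁ = 0 := by
    linear_combination hc12 + hc23 + hc31
  -- the determinant is positive
  have hΔid := sin_add_sin_sub_sin (θ₂ - θ₁) (θ₃ - θ₂)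
  have hxy : θ₂ - θ₁ + (θ₃ - θ₂) = θ₃ - θ₁ := by ring
  rw [hxy] at hΔid
  have hs1 : 0 < Real.sin ((θ₂ - θ₁)/2) :=
    Real.sin_pos_of_pos_of_lt_pi (by linarith) (by linarith)
  have hs2 : 0 < Real.sin ((θ₃ - θ₂)/2) :=
    Real.sin_pos_of_pos_of_lt_pi (by linarith) (by linarith)
  have hs3 : 0 < Real.sin ((θ₃ - θ₁)/2) :=
    Real.sin_pos_of_pos_of_lt_pi (by linarith) (by linarith)
  have hΔpos : 0 < Real.sin (θ₂ - θ₁) + Real.sin (θ₃ - θ₂) - Real.sin (θ₃ - θ₁) := by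
    rw [hΔid]; positivity
  rw [Real.sin_sub, Real.sin_sub, Real.sin_sub] at hΔpos
  set Δ : ℝ := s₂ * c₁ - c₂ * s₁ + (s₃ * c₂ - c₃ * s₂) - (s₃ * c₁ - c₃ * s₁) with hΔdef
  have hΔne : Δ ≠ 0 := by positivity
  -- Cramer: the α differences vanish
  have hA1 : α₁ - α₂ = 0 := by
    have h : (α₁ - α₂) * Δ = 0 := by
      rw [hΔdef]; linear_combination (s₃ - s₁) * Ec - (c₃ - c₁) * Es
    exact (mul_eq_zero.mp h).resolve_right hΔne
  have hA2 : α₂ - α₃ = 0 := by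
    have h : (α₂ - α₃) * Δ = 0 := by
      rw [hΔdef]; linear_combination (-(s₂ - s₁)) * Ec + (c₂ - c₁) * Es
    exact (mul_eq_zero.mp h).resolve_right hΔne
  have hα2 : α₂ = α₁ := by linarith
  have hα3 : α₃ = α₁ := by linarith
  have hβ2 : β₂ = β₁ := by
    have := hb12; rw [hα2] at this; simp at this; linarith [this]
  have hβ3 : β₃ = β₁ := by
    have := hb31; rw [hα3] at this; simp at this; linarith [this]
  have hγ2 : γ₂ = γ₁ := by
    have := hc12; rw [hα2] at this; simp at this; linarith [this]
  have hγ3 : γ₃ = γ₁ := by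
    have := hc31; rw [hα3] at this; simp at this; linarith [this]
  refine ⟨?_, by rw [hα2, hβ2, hγ2], by rw [hα3, hβ3, hγ3]⟩
  -- f equals the Möbius field on a fundamental interval
  have hIcc : ∀ y ∈ Set.Icc θ₁ (θ₁ + 2 * Real.pi),
      f y = α₁ + β₁ * Real.cos y + γ₁ * Real.sin y := by
    intro y hy
    rcases le_or_gt y θ₂ with h | h
    · exact h1 y ⟨hy.1, h⟩
    rcases le_or_gt y θ₃ with h' | h'
    · rw [h2 y ⟨h.le, h'⟩, hα2, hβ2, hγ2]
    · rw [h3 y ⟨h'.le, hy.2⟩, hα3, hβ3, hγ3]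
  intro x
  have h2π : (0:ℝ) < 2 * Real.pi := by positivity
  set n : ℤ := ⌊(x - θ₁) / (2 * Real.pi)⌋ with hn
  have hlo := Int.sub_floor_div_mul_nonneg (x - θ₁) h2π
  have hhi := Int.sub_floor_div_mul_lt (x - θ₁) h2π
  have hmem : x - (n : ℝ) * (2 * Real.pi) ∈ Set.Icc θ₁ (θ₁ + 2 * Real.pi) := by
    constructor <;> [linarith; linarith]
  have hfx : f (x - (n : ℝ) * (2 * Real.pi)) = f x := hper.sub_int_mul_eq n
  have hcx : Real.cos (x - (n : ℝ) * (2 * Real.pi)) = Real.cos x :=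
    Real.cos_periodic.sub_int_mul_eq n
  have hsx : Real.sin (x - (n : ℝ) * (2 * Real.pi)) = Real.sin x :=
    Real.sin_periodic.sub_int_mul_eq n
  have := hIcc _ hmem
  rw [hfx, hcx, hsx] at this
  exact this
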